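/- Let H be a complex Hilbert space, X and Y closed subspaces of H, and let P : H → Xᗮ be the orthogonal projection of H onto the orthogonal complement Xᗮ of X. Then (X, Y) is a Fredholm pair in H if and only if the restriction P|_Y : Y → Xᗮ is a Fredholm operator, and in that case ind(X, Y) = ind(P|_Y) = dim ker(P|_Y) − dim(Xᗮ / range(P|_Y)). -/

import Mathlib

open Module

/-- A pair `(X, Y)` of closed subspaces of a complex Hilbert (or normed) space `H`
is a *Fredholm pair* if `X ∩ Y` is finite-dimensional, `X + Y` is closed, and
`H / (X + Y)` is finite-dimensional. -/
def IsFredholmPair {H : Type*} [NormedAddCommGroup H] [NormedSpace ℂ H]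
    (X Y : Submodule ℂ H) : Prop :=
  FiniteDimensional ℂ ↥(X ⊓ Y) ∧ IsClosed ((X ⊔ Y : Submodule ℂ H) : Set H) ∧
    FiniteDimensional ℂ (H ⧸ (X ⊔ Y))

/-- The index of a Fredholm pair: `dim (X ∩ Y) - dim (H / (X + Y))`. -/
noncomputable def fpIndex {H : Type*} [NormedAddCommGroup H] [NormedSpace ℂ H]
    (X Y : Submodule ℂ H) : ℤ :=
  (finrank ℂ ↥(X ⊓ Y) : ℤ) - (finrank ℂ (H ⧸ (X ⊔ Y)) : ℤ)


/-- The orthogonal complement of any subspace of a Hilbert space is closed, hence complete,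
hence admits an orthogonal projection. -/
instance orthoHasProj {H : Type*} [NormedAddCommGroup H] [InnerProductSpace ℂ H]
    [CompleteSpace H] (X : Submodule ℂ H) : Submodule.HasOrthogonalProjection Xᗮ :=
  haveI : CompleteSpace ↥Xᗮ := X.isClosed_orthogonal.completeSpace_coe
  Submodule.HasOrthogonalProjection.ofCompleteSpace Xᗮ

/-- A bounded operator between normed spaces is *Fredholm* if its kernel is
finite-dimensional and its range is closed with finite-dimensional cokernel. -/
def IsFredholmOp {E F : Type*} [NormedAddCommGroup E] [NormedSpace ℂ E]
    [NormedAddCommGroup F] [NormedSpace ℂ F] (T : E →L[ℂ] F) : Prop :=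
  FiniteDimensional ℂ (LinearMap.ker (T : E →ₗ[ℂ] F)) ∧
    IsClosed ((LinearMap.range (T : E →ₗ[ℂ] F) : Submodule ℂ F) : Set F) ∧
    FiniteDimensional ℂ (F ⧸ LinearMap.range (T : E →ₗ[ℂ] F))

/-- The index of a Fredholm operator: `dim ker T - dim coker T`. -/
noncomputable def opIndex {E F : Type*} [NormedAddCommGroup E] [NormedSpace ℂ E]
    [NormedAddCommGroup F] [NormedSpace ℂ F] (T : E →L[ℂ] F) : ℤ :=
  (finrank ℂ (LinearMap.ker (T : E →ₗ[ℂ] F)) : ℤ) - (finrank ℂ (F ⧸ LinearMap.range (T : E →ₗ[ℂ] F)) : ℤ)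

theorem stmt9 {H : Type*} [NormedAddCommGroup H] [InnerProductSpace ℂ H] [CompleteSpace H]
    (X Y : Submodule ℂ H) (hXc : IsClosed (X : Set H)) (hYc : IsClosed (Y : Set H))
    (P : ↥Y →L[ℂ] ↥Xᗮ) (hP : P = (Submodule.orthogonalProjectionOnto Xᗮ).comp Y.subtypeL) :
    (IsFredholmPair X Y ↔ IsFredholmOp P) ∧
    (IsFredholmPair X Y →
      fpIndex X Y = opIndex P ∧
      opIndex P = (finrank ℂ (LinearMap.ker (P : ↥Y →ₗ[ℂ] ↥Xᗮ)) : ℤ) -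
        (finrank ℂ (↥Xᗮ ⧸ LinearMap.range (P : ↥Y →ₗ[ℂ] ↥Xᗮ)) : ℤ)) := by
  haveI : CompleteSpace X := hXc.completeSpace_coe
  haveI : Submodule.HasOrthogonalProjection X := Submodule.HasOrthogonalProjection.ofCompleteSpace X
  have hXX : Xᗮᗮ = X := Submodule.orthogonal_orthogonal X
  set Q : H →L[ℂ] ↥Xᗮ := Submodule.orthogonalProjectionOnto Xᗮ with hQdef
  have hPapp : ∀ y : Y, P y = Q (y : H) := by intro y; rw [hP]; rfl
  set R : Submodule ℂ ↥Xᗮ := LinearMap.range (P : ↥Y →ₗ[ℂ] ↥Xᗮ) with hRdef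
  have hQX : ∀ h ∈ X, Q h = 0 := fun h hh =>
    Submodule.orthogonalProjectionOnto_apply_of_mem_orthogonal
      (X.le_orthogonal_orthogonal hh)
  have hsub : ∀ h : H, h - (Q h : H) ∈ X := by
    intro h
    have := Submodule.sub_starProjection_mem_orthogonal (K := Xᗮ) h
    rwa [hXX] at this
  have hQself : ∀ w : ↥Xᗮ, Q (w : H) = w := fun w =>
    Submodule.orthogonalProjectionOnto_mem_subspace_eq_self w
  -- key: membership characterization
  have hkey : ∀ h : H, h ∈ X ⊔ Y ↔ Q h ∈ R := by
    intro h
    constructor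
    · intro hh
      obtain ⟨x, hx, y, hy, rfl⟩ := Submodule.mem_sup.mp hh
      have : Q (x + y) = P ⟨y, hy⟩ := by
        rw [map_add, hQX x hx, zero_add, hPapp]
      rw [this]
      exact LinearMap.mem_range_self _ _
    · rintro ⟨y, hy⟩
      have hQeq : ((Q h : H)) = ((Q (y : H) : ↥Xᗮ) : H) := by
        rw [← hPapp, ← ContinuousLinearMap.coe_coe (f := P), hy]
      have hrepr : h = ((h - (Q h : H)) - ((y : H) - ((Q (y : H) : ↥Xᗮ) : H)))
          + (y : H) := by
        rw [hQeq]; abel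
      rw [hrepr]
      exact Submodule.add_mem_sup (X.sub_mem (hsub h) (hsub (y : H))) y.2
  -- kernel
  have hker : LinearMap.ker (P : ↥Y →ₗ[ℂ] ↥Xᗮ) = (X ⊓ Y).comap Y.subtype := by
    ext y
    simp only [LinearMap.mem_ker, Submodule.mem_comap, Submodule.mem_inf,
      Submodule.subtype_apply]
    constructor
    · intro h0
      refine ⟨?_, y.2⟩
      have := hsub (y : H)
      rw [← hPapp, ← ContinuousLinearMap.coe_coe, h0] at this
      simpa using this
    · intro hxy
      have := hQX (y : H) hxy.1
      rw [← hPapp] at this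
      exact this
  have eK : ↥(LinearMap.ker (P : ↥Y →ₗ[ℂ] ↥Xᗮ)) ≃ₗ[ℂ] ↥(X ⊓ Y) :=
    (LinearEquiv.ofEq _ _ hker).trans (Submodule.comapSubtypeEquivOfLe inf_le_right)
  -- quotient
  set φ : H →ₗ[ℂ] (↥Xᗮ ⧸ R) := R.mkQ.comp (Q : H →ₗ[ℂ] ↥Xᗮ) with hφdef
  have hφapp : ∀ h : H, φ h = R.mkQ (Q h) := fun h => rfl
  have hkerφ : LinearMap.ker φ = X ⊔ Y := by
    ext h
    rw [LinearMap.mem_ker, hφapp, Submodule.mkQ_apply, Submodule.Quotient.mk_eq_zero,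
      hkey]
  have hφsurj : Function.Surjective φ := by
    intro z
    obtain ⟨w, rfl⟩ := Submodule.mkQ_surjective R z
    exact ⟨(w : H), by rw [hφapp, hQself]⟩
  have eQ : (H ⧸ (X ⊔ Y)) ≃ₗ[ℂ] (↥Xᗮ ⧸ R) :=
    (Submodule.quotEquivOfEq _ _ hkerφ.symm).trans (φ.quotKerEquivOfSurjective hφsurj)
  -- closedness equivalence
  have hclosed : IsClosed ((X ⊔ Y : Submodule ℂ H) : Set H) ↔ IsClosed (R : Set ↥Xᗮ) := by
    constructor
    · intro hc
      have : (R : Set ↥Xᗮ) = Subtype.val ⁻¹' ((X ⊔ Y : Submodule ℂ H) : Set H) := by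
        ext w
        simp only [Set.mem_preimage, SetLike.mem_coe]
        rw [hkey, hQself]
      rw [this]
      exact hc.preimage continuous_subtype_val
    · intro hc
      have : ((X ⊔ Y : Submodule ℂ H) : Set H) = Q ⁻¹' (R : Set ↥Xᗮ) := by
        ext h
        simp only [Set.mem_preimage, SetLike.mem_coe]
        exact hkey h
      rw [this]
      exact hc.preimage Q.continuous
  refine ⟨⟨?_, ?_⟩, ?_⟩
  · rintro ⟨h1, h2, h3⟩
    exact ⟨eK.symm.finiteDimensional, hclosed.mp h2, eQ.finiteDimensional⟩
  · rintro ⟨h1, h2, h3⟩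
    exact ⟨eK.finiteDimensional, hclosed.mpr h2, eQ.symm.finiteDimensional⟩
  · intro _
    refine ⟨?_, rfl⟩
    unfold fpIndex opIndex
    rw [eK.finrank_eq, eQ.finrank_eq]
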